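/- (Converse to Lemma 3.2) Let n ≥ 1 and let v, v' : Fin (n+1) → ℝⁿ be points with v(i) ≠ v(0) and v'(i) ≠ v'(0) for all i ≠ 0, and set w(i) = inv_{v(0),1}(v(i)), w'(i) = inv_{v'(0),1}(v'(i)) for i ≠ 0. Suppose there is λ > 0 such that dist(w'(i), w'(j)) = λ·dist(w(i), w(j)) for all i, j ≠ 0. Define u : Fin (n+1) → ℝ by u(0) = −log λ and u(i) = log λ + 2·log(dist(v'(i), v'(0)) / dist(v(i), v(0))) for i ≠ 0. Then dist(v'(i), v'(j)) = exp((u(i)+u(j))/2)·dist(v(i), v(j)) for all i ≠ j. -/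
import Mathlib

/-- Inversion in the sphere of center `p` and radius `R`. -/
noncomputable def sphInv {n : ℕ} (p : EuclideanSpace ℝ (Fin n)) (R : ℝ)
    (x : EuclideanSpace ℝ (Fin n)) : EuclideanSpace ℝ (Fin n) :=
  p + (R ^ 2 / (dist x p) ^ 2) • (x - p)

lemma sphInv_eq_inversion {n : ℕ} (p : EuclideanSpace ℝ (Fin n)) (R : ℝ)
    (x : EuclideanSpace ℝ (Fin n)) : sphInv p R x = EuclideanGeometry.inversion p R x := by
  simp only [sphInv, EuclideanGeometry.inversion, div_pow, vsub_eq_sub, vadd_eq_add]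
  ring_nf
  abel

lemma dist_sphInv {n : ℕ} {p x y : EuclideanSpace ℝ (Fin n)} (hx : x ≠ p) (hy : y ≠ p) :
    dist (sphInv p 1 x) (sphInv p 1 y) = dist x y / (dist x p * dist y p) := by
  rw [sphInv_eq_inversion, sphInv_eq_inversion,
    EuclideanGeometry.dist_inversion_inversion hx hy]
  ring

/-- Converse to Lemma 3.2: if the inverted configurations `w`, `w'` are similar with ratio
`λ`, then `v` and `v'` are discretely conformally related with the explicit scale factors
`u 0 = -log λ` and `u i = log λ + 2 log (dist (v' i) (v' 0) / dist (v i) (v 0))` for `i ≠ 0`. -/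
theorem similar_inverted_implies_conformal {n : ℕ} (hn : 1 ≤ n)
    (v v' : Fin (n + 1) → EuclideanSpace ℝ (Fin n))
    (hv : ∀ i, i ≠ 0 → v i ≠ v 0) (hv' : ∀ i, i ≠ 0 → v' i ≠ v' 0)
    (lam : ℝ) (hlam : 0 < lam)
    (h : ∀ i j, i ≠ 0 → j ≠ 0 →
      dist (sphInv (v' 0) 1 (v' i)) (sphInv (v' 0) 1 (v' j)) =
        lam * dist (sphInv (v 0) 1 (v i)) (sphInv (v 0) 1 (v j)))
    (u : Fin (n + 1) → ℝ) (hu0 : u 0 = -Real.log lam)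
    (hui : ∀ i, i ≠ 0 →
      u i = Real.log lam + 2 * Real.log (dist (v' i) (v' 0) / dist (v i) (v 0))) :
    ∀ i j, i ≠ j →
      dist (v' i) (v' j) = Real.exp ((u i + u j) / 2) * dist (v i) (v j) := by
  have key : ∀ i, i ≠ 0 →
      dist (v' i) (v' 0) = Real.exp ((u i + u 0) / 2) * dist (v i) (v 0) := by
    intro i hi
    have hd : 0 < dist (v i) (v 0) := dist_pos.2 (hv i hi)
    have hd' : 0 < dist (v' i) (v' 0) := dist_pos.2 (hv' i hi)
    have : (u i + u 0) / 2 = Real.log (dist (v' i) (v' 0) / dist (v i) (v 0)) := by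
      rw [hui i hi, hu0]; ring
    rw [this, Real.exp_log (div_pos hd' hd)]
    field_simp
  intro i j hij
  rcases eq_or_ne i 0 with rfl | hi
  · rw [add_comm (u 0), dist_comm (v' 0) (v' j), dist_comm (v 0) (v j)]
    exact key j (Ne.symm hij)
  rcases eq_or_ne j 0 with rfl | hj
  · exact key i hi
  · have hd : ∀ k, k ≠ 0 → 0 < dist (v k) (v 0) := fun k hk => dist_pos.2 (hv k hk)
    have hd' : ∀ k, k ≠ 0 → 0 < dist (v' k) (v' 0) := fun k hk => dist_pos.2 (hv' k hk)
    have H := h i j hi hj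
    rw [dist_sphInv (hv' i hi) (hv' j hj), dist_sphInv (hv i hi) (hv j hj)] at H
    have heq : dist (v' i) (v' j) =
        lam * (dist (v' i) (v' 0) / dist (v i) (v 0)) *
          (dist (v' j) (v' 0) / dist (v j) (v 0)) * dist (v i) (v j) := by
      have h1 := (hd i hi).ne'
      have h2 := (hd j hj).ne'
      have h3 := (hd' i hi).ne'
      have h4 := (hd' j hj).ne'
      field_simp at H ⊢
      linarith [H]
    rw [heq]
    congr 1
    rw [hui i hi, hui j hj]
    have e1 : Real.exp (Real.log lam) = lam := Real.exp_log hlam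
    have e2 : Real.exp (Real.log (dist (v' i) (v' 0) / dist (v i) (v 0))) =
        dist (v' i) (v' 0) / dist (v i) (v 0) :=
      Real.exp_log (div_pos (hd' i hi) (hd i hi))
    have e3 : Real.exp (Real.log (dist (v' j) (v' 0) / dist (v j) (v 0))) =
        dist (v' j) (v' 0) / dist (v j) (v 0) :=
      Real.exp_log (div_pos (hd' j hj) (hd j hj))
    have : (Real.log lam + 2 * Real.log (dist (v' i) (v' 0) / dist (v i) (v 0)) +
        (Real.log lam + 2 * Real.log (dist (v' j) (v' 0) / dist (v j) (v 0)))) / 2 =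
        Real.log lam + Real.log (dist (v' i) (v' 0) / dist (v i) (v 0)) +
        Real.log (dist (v' j) (v' 0) / dist (v j) (v 0)) := by ring
    rw [this, Real.exp_add, Real.exp_add, e1, e2, e3]
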